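/- Let A ∈ ℤ^{m×n}, b ∈ ℤ^m, c ∈ ℤ^n, u ∈ ℤ^n_{≥0}, and let P = {x ∈ ℝ^n : Ax = b, 0 ≤ x ≤ u}. Let x* ∈ P satisfy c^T x* ≥ c^T x for all x ∈ P, and let z* ∈ P ∩ ℤ^n be such that c^T z* ≥ c^T z for all z ∈ P ∩ ℤ^n, and such that ‖z* − x*‖_1 is minimal among all such optimal integer points. Then the only cycle of z* − x* is the zero vector. -/
import Mathlib


open Matrix

lemma cycle_coord_helper (x z Y u : ℝ) (h1 : |Y| ≤ |z - x|) (h2 : 0 ≤ Y * (z - x))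
    (hx1 : 0 ≤ x) (hx2 : x ≤ u) (hz1 : 0 ≤ z) (hz2 : z ≤ u) :
    (0 ≤ z - Y ∧ z - Y ≤ u) ∧ (0 ≤ x + Y ∧ x + Y ≤ u) ∧ |z - Y - x| = |z - x| - |Y| := by
  rcases abs_cases Y with ⟨hY, hY0⟩ | ⟨hY, hY0⟩ <;>
  rcases abs_cases (z - x) with ⟨hd, hd0⟩ | ⟨hd, hd0⟩ <;>
  rw [hY, hd] at h1
  · refine ⟨⟨by linarith, by linarith⟩, ⟨by linarith, by linarith⟩, ?_⟩
    rw [hY, hd, abs_of_nonneg (by linarith)]; ring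
  · have hY0' : Y = 0 := by nlinarith
    subst hY0'
    exact ⟨⟨by linarith, by linarith⟩, ⟨by linarith, by linarith⟩, by simp [hd, hY]⟩
  · have hY0' : Y = 0 := by nlinarith
    subst hY0'
    exact ⟨⟨by linarith, by linarith⟩, ⟨by linarith, by linarith⟩, by simp [hd, hY]⟩
  · refine ⟨⟨by linarith, by linarith⟩, ⟨by linarith, by linarith⟩, ?_⟩
    rw [hY, hd, abs_of_nonpos (by linarith)]; ring

/-- If `x*` is an optimal solution of the LP relaxation and `z*` is an optimal integer solution
minimizing `‖z* − x*‖₁` among all optimal integer solutions, then the only cycle of `z* − x*`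
(a `y ∈ ℤ^n` with `Ay = 0`, `|y_i| ≤ |(z* − x*)_i|` and `y_i·(z* − x*)_i ≥ 0` for all `i`)
is the zero vector. -/
theorem minimal_optimum_has_no_cycle
    (m n : ℕ)
    (A : Matrix (Fin m) (Fin n) ℤ) (b : Fin m → ℤ) (c : Fin n → ℤ)
    (u : Fin n → ℤ) (hu : ∀ i, 0 ≤ u i)
    (P : Set (Fin n → ℝ))
    (hP : P = {x : Fin n → ℝ |
      (Matrix.mulVec (fun i j => (A i j : ℝ)) x = fun i => (b i : ℝ)) ∧
      ∀ i, 0 ≤ x i ∧ x i ≤ (u i : ℝ)})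
    (xstar : Fin n → ℝ) (hxP : xstar ∈ P)
    (hx_opt : ∀ x ∈ P, ∑ i, (c i : ℝ) * x i ≤ ∑ i, (c i : ℝ) * xstar i)
    (zstar : Fin n → ℤ) (hzP : (fun i => (zstar i : ℝ)) ∈ P)
    (hz_opt : ∀ z : Fin n → ℤ, (fun i => (z i : ℝ)) ∈ P → c ⬝ᵥ z ≤ c ⬝ᵥ zstar)
    (hz_min : ∀ z : Fin n → ℤ, (fun i => (z i : ℝ)) ∈ P →
      (∀ z' : Fin n → ℤ, (fun i => (z' i : ℝ)) ∈ P → c ⬝ᵥ z' ≤ c ⬝ᵥ z) →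
      ∑ i, |(zstar i : ℝ) - xstar i| ≤ ∑ i, |(z i : ℝ) - xstar i|) :
    ∀ y : Fin n → ℤ,
      A.mulVec y = 0 →
      (∀ i, |(y i : ℝ)| ≤ |(zstar i : ℝ) - xstar i|) →
      (∀ i, 0 ≤ (y i : ℝ) * ((zstar i : ℝ) - xstar i)) →
      y = 0 := by
  intro y hAy hyle hysign
  rw [hP] at hxP hzP
  obtain ⟨hAx, hxbd⟩ := hxP
  obtain ⟨hAz, hzbd⟩ := hzP
  -- cast of A y = 0 to ℝ
  have hAyR : ∀ i, ∑ j, (A i j : ℝ) * (y j : ℝ) = 0 := by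
    intro i
    have := congrFun hAy i
    simp only [mulVec, dotProduct, Pi.zero_apply] at this
    calc ∑ j, (A i j : ℝ) * (y j : ℝ) = ((∑ j, A i j * y j : ℤ) : ℝ) := by push_cast; rfl
      _ = 0 := by rw [this]; simp
  have hAxR : ∀ i, ∑ j, (A i j : ℝ) * xstar j = (b i : ℝ) := fun i => congrFun hAx i
  have hAzR : ∀ i, ∑ j, (A i j : ℝ) * (zstar j : ℝ) = (b i : ℝ) := fun i => congrFun hAz i
  -- per-coordinate facts
  have hco : ∀ i, (0 ≤ ((zstar i : ℝ) - y i) ∧ ((zstar i : ℝ) - y i) ≤ u i) ∧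
      (0 ≤ xstar i + (y i : ℝ) ∧ xstar i + (y i : ℝ) ≤ u i) ∧
      |(zstar i : ℝ) - y i - xstar i| = |(zstar i : ℝ) - xstar i| - |(y i : ℝ)| := by
    intro i
    exact cycle_coord_helper (xstar i) (zstar i) (y i) (u i) (hyle i) (hysign i)
      (hxbd i).1 (hxbd i).2 (hzbd i).1 (hzbd i).2
  -- z* - y is feasible (integer)
  have hzyP : (fun i => ((zstar i - y i : ℤ) : ℝ)) ∈ P := by
    rw [hP]
    refine ⟨funext fun i => ?_, fun i => ?_⟩
    · simp only [mulVec, dotProduct]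
      push_cast
      simp only [mul_sub]
      rw [Finset.sum_sub_distrib, hAzR i, hAyR i, sub_zero]
    · push_cast
      exact (hco i).1
  -- x* + y is feasible (real)
  have hxyP : (fun i => xstar i + (y i : ℝ)) ∈ P := by
    rw [hP]
    refine ⟨funext fun i => ?_, fun i => (hco i).2.1⟩
    simp only [mulVec, dotProduct, mul_add]
    rw [Finset.sum_add_distrib, hAxR i, hAyR i, add_zero]
  -- c ⬝ y ≥ 0 from integer optimality
  have h1 : 0 ≤ c ⬝ᵥ y := by
    have := hz_opt _ hzyP
    simp only [dotProduct, mul_sub, Finset.sum_sub_distrib] at this ⊢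
    linarith
  -- c ⬝ y ≤ 0 from LP optimality
  have h2 : c ⬝ᵥ y ≤ 0 := by
    have := hx_opt _ hxyP
    have h2' : ∑ i, (c i : ℝ) * (y i : ℝ) ≤ 0 := by
      simp only [mul_add, Finset.sum_add_distrib] at this
      linarith
    have : ((c ⬝ᵥ y : ℤ) : ℝ) ≤ 0 := by
      push_cast [dotProduct]
      exact h2'
    exact_mod_cast this
  have hcy : c ⬝ᵥ y = 0 := le_antisymm h2 h1
  -- z* - y is optimal among integer points
  have hzyopt : ∀ z' : Fin n → ℤ, (fun i => (z' i : ℝ)) ∈ P →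
      c ⬝ᵥ z' ≤ c ⬝ᵥ (fun i => zstar i - y i) := by
    intro z' hz'
    have := hz_opt z' hz'
    have heq : c ⬝ᵥ (fun i => zstar i - y i) = c ⬝ᵥ zstar := by
      simp only [dotProduct, mul_sub, Finset.sum_sub_distrib]
      simp only [dotProduct] at hcy
      omega
    omega
  have hmin := hz_min _ hzyP hzyopt
  have hsum : ∑ i, |(((zstar i - y i : ℤ)) : ℝ) - xstar i|
      = ∑ i, (|(zstar i : ℝ) - xstar i| - |(y i : ℝ)|) := by
    refine Finset.sum_congr rfl fun i _ => ?_
    push_cast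
    exact (hco i).2.2
  rw [hsum, Finset.sum_sub_distrib] at hmin
  have hys : ∑ i, |(y i : ℝ)| ≤ 0 := by linarith
  have hall : ∀ i ∈ Finset.univ, |(y i : ℝ)| = 0 := by
    intro i _
    have h0 : ∑ i, |(y i : ℝ)| = 0 :=
      le_antisymm hys (Finset.sum_nonneg fun i _ => abs_nonneg _)
    exact (Finset.sum_eq_zero_iff_of_nonneg fun i _ => abs_nonneg _).mp h0 i (Finset.mem_univ i)
  funext i
  have := hall i (Finset.mem_univ i)
  have : (y i : ℝ) = 0 := abs_eq_zero.mp this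
  exact_mod_cast this
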